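/- Let H = [[f,u],[g,v]] with entries in L^∞. Then the generalized Cauchy singular integral operator R_H is an isometry on L² if and only if both of the following hold: (1) |f| = |v| = 1 almost everywhere; (2) either (a) f, g, conj(u), conj(v) ∈ H^∞, or (b) there exists a unimodular constant λ such that f − λg, conj(u) − conj(λ)·conj(v), and f·conj(v) all lie in H^∞. -/

import Mathlib

noncomputable section

open MeasureTheory Complex ComplexConjugate InnerProductSpace ContinuousLinearMap

namespace GSIO

instance : Fact (0 < 2 * Real.pi) := ⟨by positivity⟩

/-- The circle, modeled as `ℝ / 2πℤ`. -/
abbrev Circ : Type := AddCircle (2 * Real.pi)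

/-- Normalized Haar (arc-length) measure on the circle. -/
abbrev μC : Measure Circ := AddCircle.haarAddCircle

/-- `L²` of the circle. -/
abbrev L2 : Type := Lp ℂ 2 μC

/-- `L^∞` of the circle. -/
abbrev Linf : Type := Lp ℂ ⊤ μC

/-- The Hardy space `H²`: those `L²` functions whose negative Fourier coefficients vanish. -/
def Hardy : Submodule ℂ L2 where
  carrier := {f : L2 | ∀ n : ℤ, n < 0 → fourierCoeff (f : Circ → ℂ) n = 0}
  zero_mem' := by
    intro n hn
    rw [← fourierBasis_repr]
    simp
  add_mem' := by
    intro a b ha hb n hn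
    have ha' := ha n hn
    have hb' := hb n hn
    rw [← fourierBasis_repr] at ha' hb' ⊢
    rw [map_add, lp.coeFn_add, Pi.add_apply, ha', hb', add_zero]
  smul_mem' := by
    intro c a ha n hn
    have ha' := ha n hn
    rw [← fourierBasis_repr] at ha' ⊢
    rw [_root_.map_smul, lp.coeFn_smul, Pi.smul_apply, ha', smul_zero]

theorem isClosed_Hardy : IsClosed (Hardy : Set L2) := by
  have h : (Hardy : Set L2) =
      ⋂ n : {m : ℤ // m < 0}, (fun f : L2 =>
        (innerSL ℂ (fourierBasis (T := 2 * Real.pi) n.1)) f) ⁻¹' {0} := by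
    ext f
    simp only [Set.mem_iInter, Set.mem_preimage, Set.mem_singleton_iff, SetLike.mem_coe]
    constructor
    · intro hf n
      have h1 := hf n.1 n.2
      rw [← fourierBasis_repr, fourierBasis.repr_apply_apply] at h1
      simpa using h1
    · intro hf n hn
      have h1 := hf ⟨n, hn⟩
      rw [← fourierBasis_repr, fourierBasis.repr_apply_apply]
      simpa using h1
  rw [h]
  exact isClosed_iInter fun n =>
    isClosed_singleton.preimage (innerSL ℂ _).continuous

instance : CompleteSpace Hardy := isClosed_Hardy.completeSpace_coe

/-- The Riesz projection `P₊`, i.e. the orthogonal projection of `L²` onto `H²`. -/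
def Pp : L2 →L[ℂ] L2 := Hardy.subtypeL.comp Hardy.orthogonalProjectionOnto

/-- `P₋ = I − P₊`. -/
def Pm : L2 →L[ℂ] L2 := ContinuousLinearMap.id ℂ L2 - Pp

/-- The pointwise product of an `L^∞` function with an `L²` function, as an `L²` function. -/
def mulFun (φ : Linf) (x : L2) : L2 :=
  ((Lp.memLp x).smul (r := 2) (Lp.memLp φ)).toLp ((φ : Circ → ℂ) • (x : Circ → ℂ))

theorem mulFun_add (φ : Linf) (x y : L2) : mulFun φ (x + y) = mulFun φ x + mulFun φ y := by
  rw [mulFun, mulFun, mulFun, ← MemLp.toLp_add]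
  apply MemLp.toLp_congr
  filter_upwards [Lp.coeFn_add x y] with t ht
  have ht' : ((x + y : L2) : Circ → ℂ) t = (x : Circ → ℂ) t + (y : Circ → ℂ) t := by
    simpa using ht
  simp only [Pi.mul_apply, Pi.smul_apply, Pi.add_apply, smul_eq_mul, ht']
  ring

theorem mulFun_smul (c : ℂ) (φ : Linf) (x : L2) : mulFun φ (c • x) = c • mulFun φ x := by
  rw [mulFun, mulFun, ← MemLp.toLp_const_smul]
  apply MemLp.toLp_congr
  filter_upwards [Lp.coeFn_smul c x] with t ht
  have ht' : ((c • x : L2) : Circ → ℂ) t = c * (x : Circ → ℂ) t := by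
    simpa using ht
  simp only [Pi.mul_apply, Pi.smul_apply, smul_eq_mul, ht']
  ring

theorem norm_mulFun_le (φ : Linf) (x : L2) : ‖mulFun φ x‖ ≤ ‖φ‖ * ‖x‖ := by
  rw [mulFun, Lp.norm_toLp]
  have h := eLpNorm_smul_le_eLpNorm_top_mul_eLpNorm (μ := μC) 2
    (Lp.aestronglyMeasurable x) (φ : Circ → ℂ)
  refine le_trans (ENNReal.toReal_mono ?_ h) ?_
  · exact ENNReal.mul_ne_top (Lp.eLpNorm_ne_top φ) (Lp.eLpNorm_ne_top x)
  · rw [ENNReal.toReal_mul, Lp.norm_def, Lp.norm_def]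

/-- The multiplication operator `M_φ` on `L²`, for `φ ∈ L^∞`. -/
def mul (φ : Linf) : L2 →L[ℂ] L2 :=
  LinearMap.mkContinuous
    { toFun := mulFun φ
      map_add' := mulFun_add φ
      map_smul' := fun c x => mulFun_smul c φ x }
    ‖φ‖ (fun x => norm_mulFun_le φ x)

/-- Pointwise product in `L^∞`. -/
def mulInf (φ ψ : Linf) : Linf :=
  ((Lp.memLp ψ).smul (r := ⊤) (Lp.memLp φ)).toLp ((φ : Circ → ℂ) • (ψ : Circ → ℂ))

/-- Complex conjugation on `L^∞`. -/
def conjInf (φ : Linf) : Linf :=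
  (show MemLp (fun t => star ((φ : Circ → ℂ) t)) ⊤ μC from
    ⟨continuous_star.comp_aestronglyMeasurable (Lp.aestronglyMeasurable φ), by
      rw [eLpNorm_congr_norm_ae (g := (φ : Circ → ℂ))
        (Filter.Eventually.of_forall fun t => norm_star _)]
      exact Lp.eLpNorm_lt_top φ⟩).toLp _

/-- Complex conjugation on `L²`. -/
def conjL2 (x : L2) : L2 :=
  (show MemLp (fun t => star ((x : Circ → ℂ) t)) 2 μC from
    ⟨continuous_star.comp_aestronglyMeasurable (Lp.aestronglyMeasurable x), by
      rw [eLpNorm_congr_norm_ae (g := (x : Circ → ℂ))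
        (Filter.Eventually.of_forall fun t => norm_star _)]
      exact Lp.eLpNorm_lt_top x⟩).toLp _

/-- The inclusion `L^∞ ⊆ L²` (the measure is finite). -/
def toL2 (φ : Linf) : L2 := ((Lp.memLp φ).mono_exponent le_top).toLp φ

/-- The constant function `c` as an element of `L^∞`. -/
def constInf (c : ℂ) : Linf := (memLp_const c).toLp (fun _ => c)

/-- An `L^∞` function is constant (a.e.). -/
def IsConst (φ : Linf) : Prop := ∃ c : ℂ, φ = constInf c

/-- `φ ∈ H^∞ = L^∞ ∩ H²`: the negative Fourier coefficients of `φ` vanish. -/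
def MemHinf (φ : Linf) : Prop := ∀ n : ℤ, n < 0 → fourierCoeff (φ : Circ → ℂ) n = 0

/-- The coordinate function `z` as an element of `L^∞`. -/
def zInf : Linf := fourierLp (T := 2 * Real.pi) ⊤ 1

/-- The function `z̄` as an element of `L^∞`. -/
def zbarInf : Linf := fourierLp (T := 2 * Real.pi) ⊤ (-1)

/-- The antiunitary operator `V : h ↦ z̄ ⬝ conj h` on `L²`. -/
def Vmap (x : L2) : L2 := mul zbarInf (conjL2 x)

/-- `φ₋ = P₋ φ` for `φ ∈ L^∞`, viewed inside `L²`. -/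
def mI (φ : Linf) : L2 := Pm (toL2 φ)

/-- The rank-one operator `p ⊗ q : x ↦ ⟪x, q⟫ · p` (the inner product being conjugate-linear
in `q`). -/
def rankOne {E : Type*} [NormedAddCommGroup E] [InnerProductSpace ℂ E] (p q : E) : E →L[ℂ] E :=
  (innerSL ℂ q).smulRight p

/-- The Hilbert space direct sum `L² ⊕ L²`. -/
abbrev L2sq : Type := WithLp 2 (L2 × L2)

/-- A pair of `L²` functions, viewed as a vector in `L² ⊕ L²`. -/
def pair (x y : L2) : L2sq := (WithLp.equiv 2 (L2 × L2)).symm (x, y)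

/-- Notation for the pointwise product in `L^∞`. -/
scoped infixl:70 " ⊙ " => GSIO.mulInf

/-- The Toeplitz operator `T_φ = P₊ M_φ P₊` (viewed as acting on the corner `H²` of `L²`). -/
def Toeplitz (φ : Linf) : L2 →L[ℂ] L2 := Pp ∘L mul φ ∘L Pp

/-- The Hankel operator `H_φ = P₋ M_φ P₊ : H² → (H²)^⊥` (as a corner operator on `L²`). -/
def Hankel (φ : Linf) : L2 →L[ℂ] L2 := Pm ∘L mul φ ∘L Pp

/-- The dual Toeplitz operator `T̃_φ = P₋ M_φ P₋` on `(H²)^⊥` (as a corner operator on `L²`). -/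
def dualToeplitz (φ : Linf) : L2 →L[ℂ] L2 := Pm ∘L mul φ ∘L Pm

/-- The generalized Cauchy singular integral operator with symbol `[[f, u], [g, v]]`:
`R x = P₊ f P₊ x + P₋ g P₊ x + P₊ u P₋ x + P₋ v P₋ x`. -/
def Rop (f u g v : Linf) : L2 →L[ℂ] L2 :=
  Pp ∘L mul f ∘L Pp + Pm ∘L mul g ∘L Pp + Pp ∘L mul u ∘L Pm + Pm ∘L mul v ∘L Pm

/-- The singular integral operator `S_{f,g} = M_f P₊ + M_g P₋` on `L²`. -/
def Sop (f g : Linf) : L2 →L[ℂ] L2 := mul f ∘L Pp + mul g ∘L Pm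



/-- Negation `t ↦ -t` preserves the Haar measure of the circle. -/
theorem mp_neg : MeasurePreserving (fun t : Circ => -t) μC μC :=
  Measure.measurePreserving_neg μC

/-- Composition with `t ↦ -t` on `L²`. -/
def reflL2 : L2 →L[ℂ] L2 :=
  (Lp.compMeasurePreservingₗᵢ ℂ (fun t : Circ => -t) mp_neg).toContinuousLinearMap

/-- Composition with `t ↦ -t` on `L^∞`: for `φ ∈ L^∞`, `φ̃(z) = φ(z̄)`. -/
def reflInf (φ : Linf) : Linf := Lp.compMeasurePreserving (fun t : Circ => -t) mp_neg φ

/-- `φ* (z) = conj (φ(z̄))`. -/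
def starInf (φ : Linf) : Linf := conjInf (reflInf φ)

/-- The flip operator `J : (Jh)(z) = z̄ · h(z̄)` on `L²`. -/
def Jop : L2 →L[ℂ] L2 := mul zbarInf ∘L reflL2

/-- The Hankel operator `𝕳_φ = P₊ M_φ J` on `H²` (as a corner operator on `L²`). -/
def HankelPlus (φ : Linf) : L2 →L[ℂ] L2 := Pp ∘L mul φ ∘L Jop ∘L Pp

/-- The adjoint `H*_φ` of the Hankel operator `H_φ`. -/
def HankelAdj (φ : Linf) : L2 →L[ℂ] L2 := ContinuousLinearMap.adjoint (Hankel φ)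

/-- `θ ∈ L^∞` is an inner function: `θ ∈ H^∞` and `|θ| = 1` a.e. -/
def IsInner (θ : Linf) : Prop := MemHinf θ ∧ ∀ᵐ t ∂μC, ‖(θ : Circ → ℂ) t‖ = 1

/-- The orthogonal projection of `L²` onto `K_θ^⊥ = θH² ⊕ z̄·conj(H²)`, namely
`P₋ + M_θ P₊ M_{conj θ}`. -/
def Qproj (θ : Linf) : L2 →L[ℂ] L2 := Pm + mul θ ∘L Pp ∘L mul (conjInf θ)


/-! ### Auxiliary infrastructure for statement 6 -/

local notation "⟪" x ", " y "⟫" => @inner ℂ _ _ x y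

/-- The Fourier Hilbert basis of `L²`. -/
abbrev bb : HilbertBasis ℤ ℂ L2 := fourierBasis (T := 2 * Real.pi)

/-- Fourier coefficient of an `L²` element. -/
def FC2 (x : L2) (n : ℤ) : ℂ := fourierCoeff (x : Circ → ℂ) n

/-- Fourier coefficient of an `L^∞` element. -/
def FC (φ : Linf) (n : ℤ) : ℂ := fourierCoeff (φ : Circ → ℂ) n

lemma FC2_eq_repr (x : L2) (n : ℤ) : FC2 x n = bb.repr x n :=
  (fourierBasis_repr x n).symm

lemma inner_bb (x : L2) (n : ℤ) : ⟪(bb n : L2), x⟫ = FC2 x n := by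
  rw [FC2_eq_repr, bb.repr_apply_apply]

lemma FC2_add (x y : L2) (n : ℤ) : FC2 (x + y) n = FC2 x n + FC2 y n := by
  simp only [FC2_eq_repr, map_add, lp.coeFn_add, Pi.add_apply]

lemma FC2_sub (x y : L2) (n : ℤ) : FC2 (x - y) n = FC2 x n - FC2 y n := by
  simp only [FC2_eq_repr, map_sub, lp.coeFn_sub, Pi.sub_apply]

lemma FC2_smul (c : ℂ) (x : L2) (n : ℤ) : FC2 (c • x) n = c * FC2 x n := by
  simp only [FC2_eq_repr, _root_.map_smul, lp.coeFn_smul, Pi.smul_apply, smul_eq_mul]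

lemma FC2_zero (n : ℤ) : FC2 (0 : L2) n = 0 := by
  simp only [FC2_eq_repr, map_zero, lp.coeFn_zero, Pi.zero_apply]

lemma FC2_ext {x y : L2} (h : ∀ n, FC2 x n = FC2 y n) : x = y := by
  apply bb.repr.injective
  apply lp.ext
  funext n
  have := h n
  rwa [FC2_eq_repr, FC2_eq_repr] at this

lemma fourierCoeff_congr_ae {h g : Circ → ℂ} (hfg : h =ᵐ[μC] g) (n : ℤ) :
    fourierCoeff h n = fourierCoeff g n := by
  unfold fourierCoeff
  refine integral_congr_ae ?_
  filter_upwards [hfg] with t ht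
  rw [ht]

lemma inner_eq_tsum_FC2 (x y : L2) : ⟪x, y⟫ = ∑' k, conj (FC2 x k) * FC2 y k := by
  rw [← bb.tsum_inner_mul_inner x y]
  refine tsum_congr fun k => ?_
  rw [inner_bb, ← inner_bb x k, inner_conj_symm]

lemma summable_FC2 (x y : L2) : Summable fun k => conj (FC2 x k) * FC2 y k := by
  refine (bb.summable_inner_mul_inner x y).congr fun k => ?_
  rw [inner_bb, ← inner_bb x k, inner_conj_symm]

lemma bb_coeFn (m : ℤ) : ((bb m : L2) : Circ → ℂ) =ᵐ[μC] fourier m := by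
  have h : (bb m : L2) = fourierLp (T := 2 * Real.pi) 2 m := by
    rw [coe_fourierBasis]
  rw [h]
  exact coeFn_fourierLp 2 m

lemma FC2_bb (m k : ℤ) : FC2 (bb m) k = if k = m then 1 else 0 := by
  rw [← inner_bb]
  exact orthonormal_iff_ite.mp bb.orthonormal k m

lemma mul_coeFn (φ : Linf) (x : L2) :
    ((mul φ x : L2) : Circ → ℂ) =ᵐ[μC] fun t => (φ : Circ → ℂ) t * (x : Circ → ℂ) t := by
  have h : (mul φ x : L2) = mulFun φ x := rfl
  rw [h, mulFun]
  filter_upwards [MemLp.coeFn_toLp (((Lp.memLp x).smul (r := 2) (Lp.memLp φ)))] with t ht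
  rw [ht]
  simp [smul_eq_mul]

lemma toL2_coeFn (φ : Linf) : ((toL2 φ : L2) : Circ → ℂ) =ᵐ[μC] (φ : Circ → ℂ) :=
  MemLp.coeFn_toLp _

lemma conjInf_coeFn (φ : Linf) :
    ((conjInf φ : Linf) : Circ → ℂ) =ᵐ[μC] fun t => conj ((φ : Circ → ℂ) t) :=
  MemLp.coeFn_toLp _

lemma mulInf_coeFn (φ ψ : Linf) :
    ((φ ⊙ ψ : Linf) : Circ → ℂ) =ᵐ[μC] fun t => (φ : Circ → ℂ) t * (ψ : Circ → ℂ) t := by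
  rw [mulInf]
  filter_upwards [MemLp.coeFn_toLp (((Lp.memLp ψ).smul (r := ⊤) (Lp.memLp φ)))] with t ht
  rw [ht]
  simp [smul_eq_mul]

lemma constInf_coeFn (c : ℂ) : ((constInf c : Linf) : Circ → ℂ) =ᵐ[μC] fun _ => c :=
  MemLp.coeFn_toLp _

lemma FC2_mul_bb (φ : Linf) (m k : ℤ) : FC2 (mul φ (bb m)) k = FC φ (k - m) := by
  have h1 : ((mul φ (bb m) : L2) : Circ → ℂ) =ᵐ[μC]
      fun t => (φ : Circ → ℂ) t * fourier m t := by
    filter_upwards [mul_coeFn φ (bb m), bb_coeFn m] with t h h'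
    rw [h, h']
  rw [FC2, fourierCoeff_congr_ae h1]
  unfold fourierCoeff
  rw [FC]
  unfold fourierCoeff
  refine integral_congr_ae (Filter.Eventually.of_forall fun t => ?_)
  have h2 : -k + m = -(k - m) := by ring
  have : fourier (-k) t * fourier m t = fourier (-(k - m)) t := by
    rw [← fourier_add, h2]
  simp only [smul_eq_mul]
  rw [← this]
  ring


lemma mem_Hardy_iff {x : L2} : x ∈ Hardy ↔ ∀ n : ℤ, n < 0 → FC2 x n = 0 := Iff.rfl

lemma bb_mem_Hardy {m : ℤ} (hm : 0 ≤ m) : (bb m : L2) ∈ Hardy := by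
  rw [mem_Hardy_iff]
  intro n hn
  rw [FC2_bb, if_neg]
  omega

lemma Pp_apply (x : L2) : Pp x = (Hardy.orthogonalProjectionOnto x : L2) := rfl

lemma Pm_apply (x : L2) : Pm x = x - Pp x := rfl

lemma FC2_Pp (x : L2) (k : ℤ) : FC2 (Pp x) k = if 0 ≤ k then FC2 x k else 0 := by
  by_cases hk : 0 ≤ k
  · rw [if_pos hk, ← inner_bb, ← inner_bb, Pp_apply]
    rw [← Submodule.starProjection_apply, ← Submodule.inner_starProjection_left_eq_right,
      Submodule.starProjection_apply]
    rw [show ((Hardy.orthogonalProjectionOnto (bb k) : L2)) = (bb k : L2) from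
      Submodule.starProjection_eq_self_iff.mpr (bb_mem_Hardy hk)]
  · rw [if_neg hk]
    have hmem : Pp x ∈ Hardy := by
      rw [Pp_apply]; exact (Hardy.orthogonalProjectionOnto x).2
    exact (mem_Hardy_iff.mp hmem) k (by omega)

lemma FC2_Pm (x : L2) (k : ℤ) : FC2 (Pm x) k = if k < 0 then FC2 x k else 0 := by
  rw [Pm_apply, FC2_sub, FC2_Pp]
  by_cases hk : 0 ≤ k
  · rw [if_pos hk, if_neg (by omega), sub_self]
  · rw [if_neg hk, if_pos (by omega), sub_zero]

lemma Pp_bb_of_nonneg {m : ℤ} (hm : 0 ≤ m) : Pp (bb m) = bb m := by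
  rw [Pp_apply]
  exact Submodule.starProjection_eq_self_iff.mpr (bb_mem_Hardy hm)

lemma bb_mem_orthogonal {m : ℤ} (hm : m < 0) : (bb m : L2) ∈ Hardyᗮ := by
  rw [Submodule.mem_orthogonal]
  intro u hu
  rw [← inner_conj_symm, inner_bb, (mem_Hardy_iff.mp hu) m hm, map_zero]

lemma Pp_bb_of_neg {m : ℤ} (hm : m < 0) : Pp (bb m) = 0 := by
  rw [Pp_apply, Submodule.orthogonalProjectionOnto_apply_of_mem_orthogonal
    (bb_mem_orthogonal hm), Submodule.coe_zero]

lemma Pm_bb_of_nonneg {m : ℤ} (hm : 0 ≤ m) : Pm (bb m) = 0 := by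
  rw [Pm_apply, Pp_bb_of_nonneg hm, sub_self]

lemma Pm_bb_of_neg {m : ℤ} (hm : m < 0) : Pm (bb m) = bb m := by
  rw [Pm_apply, Pp_bb_of_neg hm, sub_zero]


/-- The "analytic-part" partial sum. -/
def Spl (φ ψ : Linf) (m n : ℤ) : ℂ :=
  ∑' k : ℤ, if 0 ≤ k then conj (FC φ (k - m)) * FC ψ (k - n) else 0

/-- The "anti-analytic-part" partial sum. -/
def Smi (φ ψ : Linf) (m n : ℤ) : ℂ :=
  ∑' k : ℤ, if k < 0 then conj (FC φ (k - m)) * FC ψ (k - n) else 0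

lemma summable_FF (φ ψ : Linf) (m n : ℤ) :
    Summable (fun k => conj (FC φ (k - m)) * FC ψ (k - n)) := by
  refine (summable_FC2 (mul φ (bb m)) (mul ψ (bb n))).congr fun k => ?_
  rw [FC2_mul_bb, FC2_mul_bb]

lemma summable_ite (P : ℤ → Prop) [DecidablePred P] {f : ℤ → ℂ} (hf : Summable f) :
    Summable (fun k => if P k then f k else 0) := by
  refine (hf.indicator {k | P k}).congr fun k => ?_
  by_cases hk : P k <;> simp [Set.indicator_apply, Set.mem_setOf_eq, hk]

lemma summable_single (a : ℤ → ℂ) (j : ℤ) : Summable (fun k => if k = j then a k else 0) := by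
  refine (hasSum_ite_eq j (a j)).summable.congr fun k => ?_
  by_cases hk : k = j
  · subst hk; simp
  · simp [hk]

lemma tsum_single (a : ℤ → ℂ) (j : ℤ) : ∑' k, (if k = j then a k else 0) = a j := by
  rw [show (fun k => if k = j then a k else 0) = fun k => if k = j then a j else 0 by
    funext k; by_cases hk : k = j <;> simp [hk]]
  exact tsum_ite_eq j (fun _ => a j)

lemma inner_mul_mul (φ ψ : Linf) (m n : ℤ) :
    ⟪(mul φ (bb m) : L2), mul ψ (bb n)⟫ = FC (conjInf φ ⊙ ψ) (m - n) := by
  have hL : ⟪(mul φ (bb m) : L2), mul ψ (bb n)⟫ =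
      ∫ t, conj ((mul φ (bb m) : L2) t) * (mul ψ (bb n) : L2) t ∂μC := by
    rw [MeasureTheory.L2.inner_def]
    simp only [RCLike.inner_apply']
  rw [hL, FC]
  unfold fourierCoeff
  refine integral_congr_ae ?_
  filter_upwards [mul_coeFn φ (bb m), mul_coeFn ψ (bb n), bb_coeFn m, bb_coeFn n,
    mulInf_coeFn (conjInf φ) ψ, conjInf_coeFn φ] with t h1 h2 h3 h4 h5 h6
  rw [h1, h2, h3, h4, h5, h6]
  have h7 : conj (fourier m t) = fourier (-m) t := (fourier_neg).symm
  have h8 : fourier (-m) t * fourier n t = fourier (-(m - n)) t := by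
    have : -m + n = -(m - n) := by ring
    rw [← fourier_add, this]
  simp only [smul_eq_mul, map_mul]
  rw [h7, ← h8]
  ring

lemma Spl_add_Smi (φ ψ : Linf) (m n : ℤ) :
    Spl φ ψ m n + Smi φ ψ m n = FC (conjInf φ ⊙ ψ) (m - n) := by
  rw [Spl, Smi, ← Summable.tsum_add (summable_ite _ (summable_FF φ ψ m n))
    (summable_ite _ (summable_FF φ ψ m n))]
  rw [← inner_mul_mul φ ψ m n, inner_eq_tsum_FC2]
  refine tsum_congr fun k => ?_
  rw [FC2_mul_bb, FC2_mul_bb]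
  by_cases hk : 0 ≤ k
  · rw [if_pos hk, if_neg (by omega), add_zero]
  · rw [if_neg hk, if_pos (by omega), zero_add]

lemma Spl_shift (φ ψ : Linf) (m n : ℤ) :
    Spl φ ψ (m + 1) (n + 1) = Spl φ ψ m n + conj (FC φ (-1 - m)) * FC ψ (-1 - n) := by
  have e := Equiv.addRight (1 : ℤ)
  have h1 : Spl φ ψ (m + 1) (n + 1) =
      ∑' k : ℤ, if -1 ≤ k then conj (FC φ (k - m)) * FC ψ (k - n) else 0 := by
    rw [Spl, ← Equiv.tsum_eq (Equiv.addRight (1 : ℤ))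
      (fun k => if 0 ≤ k then conj (FC φ (k - (m + 1))) * FC ψ (k - (n + 1)) else 0)]
    refine tsum_congr fun k => ?_
    simp only [Equiv.coe_addRight]
    have h2 : k + 1 - (m + 1) = k - m := by ring
    have h3 : k + 1 - (n + 1) = k - n := by ring
    rw [h2, h3]
    by_cases hk : -1 ≤ k
    · rw [if_pos hk]; exact if_pos (by omega)
    · rw [if_neg hk]; exact if_neg (by omega)
  rw [h1]
  have h4 : ∀ k : ℤ, (if -1 ≤ k then conj (FC φ (k - m)) * FC ψ (k - n) else 0) =
      (if 0 ≤ k then conj (FC φ (k - m)) * FC ψ (k - n) else 0) +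
      (if k = -1 then conj (FC φ (k - m)) * FC ψ (k - n) else 0) := by
    intro k
    by_cases hk : 0 ≤ k
    · rw [if_pos (by omega), if_pos hk, if_neg (by omega), add_zero]
    · by_cases hk2 : k = -1
      · rw [if_pos (by omega), if_neg hk, if_pos hk2, zero_add]
      · rw [if_neg (by omega), if_neg hk, if_neg hk2, add_zero]
  rw [tsum_congr h4, Summable.tsum_add (summable_ite _ (summable_FF φ ψ m n))
    (summable_single _ (-1)), tsum_single, Spl]

lemma Smi_shift (φ ψ : Linf) (m n : ℤ) :
    Smi φ ψ (m + 1) (n + 1) = Smi φ ψ m n - conj (FC φ (-1 - m)) * FC ψ (-1 - n) := by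
  have h1 : Smi φ ψ (m + 1) (n + 1) =
      ∑' k : ℤ, if k < -1 then conj (FC φ (k - m)) * FC ψ (k - n) else 0 := by
    rw [Smi, ← Equiv.tsum_eq (Equiv.addRight (1 : ℤ))
      (fun k => if k < 0 then conj (FC φ (k - (m + 1))) * FC ψ (k - (n + 1)) else 0)]
    refine tsum_congr fun k => ?_
    simp only [Equiv.coe_addRight]
    have h2 : k + 1 - (m + 1) = k - m := by ring
    have h3 : k + 1 - (n + 1) = k - n := by ring
    rw [h2, h3]
    by_cases hk : k < -1
    · rw [if_pos hk]; exact if_pos (by omega)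
    · rw [if_neg hk]; exact if_neg (by omega)
  have h4 : ∀ k : ℤ, (if k < 0 then conj (FC φ (k - m)) * FC ψ (k - n) else 0) =
      (if k < -1 then conj (FC φ (k - m)) * FC ψ (k - n) else 0) +
      (if k = -1 then conj (FC φ (k - m)) * FC ψ (k - n) else 0) := by
    intro k
    by_cases hk : k < -1
    · rw [if_pos (by omega), if_pos hk, if_neg (by omega), add_zero]
    · by_cases hk2 : k = -1
      · rw [if_pos (by omega), if_neg hk, if_pos hk2, zero_add]
      · rw [if_neg (by omega), if_neg hk, if_neg hk2, add_zero]
  have h5 : Smi φ ψ m n = Smi φ ψ (m + 1) (n + 1) + conj (FC φ (-1 - m)) * FC ψ (-1 - n) := by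
    rw [Smi, tsum_congr h4, h1]
    rw [Summable.tsum_add (summable_ite _ (summable_FF φ ψ m n)) (summable_single _ (-1)), tsum_single]
  rw [h5]; ring


/-- The Fourier coefficients of `R_H e_m`. -/
def rowF (f u g v : Linf) (m k : ℤ) : ℂ :=
  if 0 ≤ m then (if 0 ≤ k then FC f (k - m) else FC g (k - m))
  else (if 0 ≤ k then FC u (k - m) else FC v (k - m))

lemma Rop_apply (f u g v : Linf) (x : L2) :
    Rop f u g v x = Pp (mul f (Pp x)) + Pm (mul g (Pp x)) + Pp (mul u (Pm x))
      + Pm (mul v (Pm x)) := by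
  simp only [Rop, ContinuousLinearMap.add_apply, ContinuousLinearMap.comp_apply]

lemma FC2_Rop_bb (f u g v : Linf) (m k : ℤ) :
    FC2 (Rop f u g v (bb m)) k = rowF f u g v m k := by
  rw [Rop_apply, FC2_add, FC2_add, FC2_add]
  by_cases hm : 0 ≤ m
  · rw [Pp_bb_of_nonneg hm, Pm_bb_of_nonneg hm, map_zero (mul u), map_zero (mul v),
      map_zero Pp, map_zero Pm, FC2_zero, FC2_Pp, FC2_Pm, FC2_mul_bb, FC2_mul_bb,
      rowF, if_pos hm]
    by_cases hk : 0 ≤ k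
    · rw [if_pos hk, if_pos hk, if_neg (by omega)]; ring
    · rw [if_neg hk, if_neg hk, if_pos (by omega)]; ring
  · rw [Pp_bb_of_neg (by omega), Pm_bb_of_neg (by omega), map_zero (mul f), map_zero (mul g),
      map_zero Pp, map_zero Pm, FC2_zero, FC2_Pp, FC2_Pm, FC2_mul_bb, FC2_mul_bb,
      rowF, if_neg hm]
    by_cases hk : 0 ≤ k
    · rw [if_pos hk, if_pos hk, if_neg (by omega)]; ring
    · rw [if_neg hk, if_neg hk, if_pos (by omega)]; ring

lemma inner_Rop (f u g v : Linf) (m n : ℤ) :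
    ⟪(Rop f u g v (bb m) : L2), Rop f u g v (bb n)⟫ =
      ∑' k, conj (rowF f u g v m k) * rowF f u g v n k := by
  rw [inner_eq_tsum_FC2]
  exact tsum_congr fun k => by rw [FC2_Rop_bb, FC2_Rop_bb]

lemma summable_row (f u g v : Linf) (m n : ℤ) :
    Summable fun k => conj (rowF f u g v m k) * rowF f u g v n k := by
  refine (summable_FC2 (Rop f u g v (bb m)) (Rop f u g v (bb n))).congr fun k => ?_
  rw [FC2_Rop_bb, FC2_Rop_bb]

lemma entry_split (f u g v φ ψ φ' ψ' : Linf) (m n : ℤ)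
    (hm : ∀ k : ℤ, rowF f u g v m k = if 0 ≤ k then FC φ (k - m) else FC φ' (k - m))
    (hn : ∀ k : ℤ, rowF f u g v n k = if 0 ≤ k then FC ψ (k - n) else FC ψ' (k - n)) :
    ⟪(Rop f u g v (bb m) : L2), Rop f u g v (bb n)⟫ = Spl φ ψ m n + Smi φ' ψ' m n := by
  rw [inner_Rop, Spl, Smi,
    ← Summable.tsum_add (summable_ite _ (summable_FF φ ψ m n)) (summable_ite _ (summable_FF φ' ψ' m n))]
  refine tsum_congr fun k => ?_
  rw [hm k, hn k]
  by_cases hk : 0 ≤ k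
  · rw [if_pos hk, if_pos hk, if_pos hk, if_neg (by omega), add_zero]
  · rw [if_neg hk, if_neg hk, if_neg hk, if_pos (by omega), zero_add]

lemma entry_pp (f u g v : Linf) {m n : ℤ} (hm : 0 ≤ m) (hn : 0 ≤ n) :
    ⟪(Rop f u g v (bb m) : L2), Rop f u g v (bb n)⟫ = Spl f f m n + Smi g g m n :=
  entry_split f u g v f f g g m n (fun k => by rw [rowF, if_pos hm])
    (fun k => by rw [rowF, if_pos hn])

lemma entry_mm (f u g v : Linf) {m n : ℤ} (hm : m < 0) (hn : n < 0) :
    ⟪(Rop f u g v (bb m) : L2), Rop f u g v (bb n)⟫ = Spl u u m n + Smi v v m n :=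
  entry_split f u g v u u v v m n (fun k => by rw [rowF, if_neg (by omega)])
    (fun k => by rw [rowF, if_neg (by omega)])

lemma entry_pm (f u g v : Linf) {m n : ℤ} (hm : 0 ≤ m) (hn : n < 0) :
    ⟪(Rop f u g v (bb m) : L2), Rop f u g v (bb n)⟫ = Spl f u m n + Smi g v m n :=
  entry_split f u g v f u g v m n (fun k => by rw [rowF, if_pos hm])
    (fun k => by rw [rowF, if_neg (by omega)])

lemma entry_mp (f u g v : Linf) {m n : ℤ} (hm : m < 0) (hn : 0 ≤ n) :
    ⟪(Rop f u g v (bb m) : L2), Rop f u g v (bb n)⟫ = Spl u f m n + Smi v g m n :=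
  entry_split f u g v u f v g m n (fun k => by rw [rowF, if_neg (by omega)])
    (fun k => by rw [rowF, if_pos hn])


lemma FC_eq_FC2 (φ : Linf) (n : ℤ) : FC φ n = FC2 (toL2 φ) n :=
  (fourierCoeff_congr_ae (toL2_coeFn φ) n).symm

lemma toL2_sub (φ ψ : Linf) : toL2 (φ - ψ) = toL2 φ - toL2 ψ := by
  apply MeasureTheory.Lp.ext
  filter_upwards [toL2_coeFn (φ - ψ), toL2_coeFn φ, toL2_coeFn ψ,
    MeasureTheory.Lp.coeFn_sub (φ : Linf) ψ,
    MeasureTheory.Lp.coeFn_sub (toL2 φ) (toL2 ψ)] with t h1 h2 h3 h4 h5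
  rw [h1, h4, h5, Pi.sub_apply, Pi.sub_apply, h2, h3]

lemma toL2_smul (c : ℂ) (φ : Linf) : toL2 (c • φ) = c • toL2 φ := by
  apply MeasureTheory.Lp.ext
  filter_upwards [toL2_coeFn (c • φ), toL2_coeFn φ,
    MeasureTheory.Lp.coeFn_smul c (φ : Linf),
    MeasureTheory.Lp.coeFn_smul c (toL2 φ)] with t h1 h2 h3 h4
  rw [h1, h3, h4, Pi.smul_apply, Pi.smul_apply, h2]

lemma FC_sub (φ ψ : Linf) (n : ℤ) : FC (φ - ψ) n = FC φ n - FC ψ n := by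
  rw [FC_eq_FC2, toL2_sub, FC2_sub, ← FC_eq_FC2, ← FC_eq_FC2]

lemma FC_smul (c : ℂ) (φ : Linf) (n : ℤ) : FC (c • φ) n = c * FC φ n := by
  rw [FC_eq_FC2, toL2_smul, FC2_smul, ← FC_eq_FC2]

lemma FC_conj (φ : Linf) (n : ℤ) : FC (conjInf φ) n = conj (FC φ (-n)) := by
  rw [FC, fourierCoeff_congr_ae (conjInf_coeFn φ), FC]
  unfold fourierCoeff
  rw [← integral_conj]
  refine integral_congr_ae (Filter.Eventually.of_forall fun t => ?_)
  simp only [smul_eq_mul, map_mul, neg_neg]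
  rw [← fourier_neg]

lemma FC_flip (φ ψ : Linf) (d : ℤ) :
    FC (conjInf φ ⊙ ψ) d = conj (FC (conjInf ψ ⊙ φ) (-d)) := by
  rw [← FC_conj]
  refine fourierCoeff_congr_ae ?_ d
  filter_upwards [mulInf_coeFn (conjInf φ) ψ, conjInf_coeFn φ,
    conjInf_coeFn (conjInf ψ ⊙ φ), mulInf_coeFn (conjInf ψ) φ, conjInf_coeFn ψ]
    with t h1 h2 h3 h4 h5
  rw [h1, h2, h3, h4, h5, map_mul, Complex.conj_conj]
  ring

lemma MemHinf_iff (φ : Linf) : MemHinf φ ↔ ∀ n : ℤ, n < 0 → FC φ n = 0 := Iff.rfl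

lemma unimod_iff (φ : Linf) :
    (∀ᵐ t ∂μC, ‖(φ : Circ → ℂ) t‖ = 1) ↔
      ∀ d : ℤ, FC (conjInf φ ⊙ φ) d = if d = 0 then 1 else 0 := by
  constructor
  · intro h d
    have h1 : ((conjInf φ ⊙ φ : Linf) : Circ → ℂ) =ᵐ[μC] ((bb 0 : L2) : Circ → ℂ) := by
      filter_upwards [h, mulInf_coeFn (conjInf φ) φ, conjInf_coeFn φ, bb_coeFn 0]
        with t h1 h2 h3 h4
      rw [h2, h3, h4, fourier_zero]
      have : Complex.normSq ((φ : Circ → ℂ) t) = 1 := by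
        rw [Complex.normSq_eq_norm_sq, h1, one_pow]
      rw [mul_comm, Complex.mul_conj, this, Complex.ofReal_one]
    rw [FC, fourierCoeff_congr_ae h1, ← FC2, FC2_bb]
  · intro h
    have h1 : toL2 (conjInf φ ⊙ φ) = (bb 0 : L2) := by
      apply FC2_ext
      intro n
      rw [← FC_eq_FC2, h n, FC2_bb]
    have h2 : ((conjInf φ ⊙ φ : Linf) : Circ → ℂ) =ᵐ[μC] fun _ => (1 : ℂ) := by
      have h3 := toL2_coeFn (conjInf φ ⊙ φ)
      rw [h1] at h3
      filter_upwards [h3.symm, bb_coeFn 0] with t h4 h5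
      rw [h4, h5, fourier_zero]
    filter_upwards [h2, mulInf_coeFn (conjInf φ) φ, conjInf_coeFn φ] with t h4 h5 h6
    have h7 : conj ((φ : Circ → ℂ) t) * (φ : Circ → ℂ) t = 1 := by
      rw [← h6]
      rw [h5, h6] at h4
      rw [h6, h4]
    have h8 : Complex.normSq ((φ : Circ → ℂ) t) = 1 := by
      have := congrArg Complex.re h7
      rwa [mul_comm, Complex.mul_conj, Complex.ofReal_re, Complex.one_re] at this
    have h9 := Complex.sq_norm ((φ : Circ → ℂ) t)
    rw [h8] at h9
    have h10 := norm_nonneg ((φ : Circ → ℂ) t)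
    nlinarith


lemma isometry_iff_entries (R : L2 →L[ℂ] L2) :
    (∀ x, ‖R x‖ = ‖x‖) ↔
      ∀ m n : ℤ, ⟪(R (bb m) : L2), R (bb n)⟫ = if m = n then 1 else 0 := by
  constructor
  · intro h m n
    have li : L2 →ₗᵢ[ℂ] L2 := ⟨(R : L2 →ₗ[ℂ] L2), h⟩
    have h2 := LinearIsometry.inner_map_map (⟨(R : L2 →ₗ[ℂ] L2), h⟩ : L2 →ₗᵢ[ℂ] L2)
      (bb m) (bb n)
    have h3 : ⟪(R (bb m) : L2), R (bb n)⟫ = ⟪(bb m : L2), bb n⟫ := h2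
    rw [h3]
    exact orthonormal_iff_ite.mp bb.orthonormal m n
  · intro h x
    set T : L2 →L[ℂ] L2 := (ContinuousLinearMap.adjoint R).comp R with hT
    have key : ∀ m : ℤ, T (bb m) = bb m := by
      intro m
      apply FC2_ext
      intro n
      rw [← inner_bb, ← inner_bb]
      have h4 : ⟪(bb n : L2), T (bb m)⟫ = ⟪(R (bb n) : L2), R (bb m)⟫ := by
        rw [hT, ContinuousLinearMap.comp_apply, ContinuousLinearMap.adjoint_inner_right]
      rw [h4, h n m]
      exact (orthonormal_iff_ite.mp bb.orthonormal n m).symm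
    have hTid : ∀ y : L2, T y = y := by
      intro y
      set S : L2 →L[ℂ] L2 := T - ContinuousLinearMap.id ℂ L2 with hS
      have hSy : S y = 0 := by
        have hsub : Submodule.span ℂ (Set.range (fun m : ℤ => (bb m : L2))) ≤
            LinearMap.ker (S : L2 →ₗ[ℂ] L2) := by
          rw [Submodule.span_le]
          rintro - ⟨m, rfl⟩
          simp only [SetLike.mem_coe, LinearMap.mem_ker, ContinuousLinearMap.coe_coe]
          rw [hS, ContinuousLinearMap.sub_apply, ContinuousLinearMap.id_apply, key m, sub_self]
        have hclosed : IsClosed ((LinearMap.ker (S : L2 →ₗ[ℂ] L2) : Submodule ℂ L2) : Set L2) :=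
          ContinuousLinearMap.isClosed_ker S
        have hle := Submodule.topologicalClosure_minimal _ hsub hclosed
        have hmem : y ∈ (Submodule.span ℂ
            (Set.range (fun m : ℤ => (bb m : L2)))).topologicalClosure := by
          rw [bb.dense_span]
          trivial
        have := hle hmem
        simpa only [LinearMap.mem_ker, ContinuousLinearMap.coe_coe] using this
      have := hSy
      rw [hS, ContinuousLinearMap.sub_apply, ContinuousLinearMap.id_apply, sub_eq_zero] at this
      exact this
    have hinner : ⟪(R x : L2), R x⟫ = ⟪x, x⟫ := by
      have h5 : ⟪x, T x⟫ = ⟪(R x : L2), R x⟫ := by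
        rw [hT, ContinuousLinearMap.comp_apply, ContinuousLinearMap.adjoint_inner_right]
      rw [← h5, hTid x]
    have a1 := inner_self_eq_norm_sq_to_K (𝕜 := ℂ) (R x)
    have a2 := inner_self_eq_norm_sq_to_K (𝕜 := ℂ) x
    rw [hinner, a2] at a1
    have h7 : ‖R x‖ ^ 2 = ‖x‖ ^ 2 := by
      exact_mod_cast a1.symm
    have h8 := norm_nonneg (R x)
    have h9 := norm_nonneg x
    nlinarith


lemma delta_congr {m n m' n' : ℤ} (h : (m = n) ↔ (m' = n')) :
    (if m = n then (1 : ℂ) else 0) = if m' = n' then 1 else 0 := by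
  by_cases hc : m = n
  · rw [if_pos hc, if_pos (h.mp hc)]
  · rw [if_neg hc, if_neg (fun hh => hc (h.mpr hh))]

lemma Spl_factor {φ ψ φ' ψ' : Linf} {m n m' n' : ℤ} (c : ℂ)
    (h : ∀ k, 0 ≤ k → conj (FC φ (k - m)) * FC ψ (k - n) =
      c * (conj (FC φ' (k - m')) * FC ψ' (k - n'))) :
    Spl φ ψ m n = c * Spl φ' ψ' m' n' := by
  rw [Spl, Spl, ← tsum_mul_left]
  refine tsum_congr fun k => ?_
  by_cases hk : 0 ≤ k
  · rw [if_pos hk, if_pos hk, h k hk]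
  · rw [if_neg hk, if_neg hk, mul_zero]

lemma Smi_factor {φ ψ φ' ψ' : Linf} {m n m' n' : ℤ} (c : ℂ)
    (h : ∀ k, k < 0 → conj (FC φ (k - m)) * FC ψ (k - n) =
      c * (conj (FC φ' (k - m')) * FC ψ' (k - n'))) :
    Smi φ ψ m n = c * Smi φ' ψ' m' n' := by
  rw [Smi, Smi, ← tsum_mul_left]
  refine tsum_congr fun k => ?_
  by_cases hk : k < 0
  · rw [if_pos hk, if_pos hk, h k hk]
  · rw [if_neg hk, if_neg hk, mul_zero]

lemma Spl_zero {φ ψ : Linf} {m n : ℤ}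
    (h : ∀ k, 0 ≤ k → conj (FC φ (k - m)) * FC ψ (k - n) = 0) :
    Spl φ ψ m n = 0 := by
  have hz : ∀ k : ℤ, (if 0 ≤ k then conj (FC φ (k - m)) * FC ψ (k - n) else 0) = 0 := by
    intro k
    by_cases hk : 0 ≤ k
    · rw [if_pos hk, h k hk]
    · rw [if_neg hk]
  rw [Spl, tsum_congr hz, tsum_zero]

lemma Smi_zero {φ ψ : Linf} {m n : ℤ}
    (h : ∀ k, k < 0 → conj (FC φ (k - m)) * FC ψ (k - n) = 0) :
    Smi φ ψ m n = 0 := by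
  have hz : ∀ k : ℤ, (if k < 0 then conj (FC φ (k - m)) * FC ψ (k - n) else 0) = 0 := by
    intro k
    by_cases hk : k < 0
    · rw [if_pos hk, h k hk]
    · rw [if_neg hk]
  rw [Smi, tsum_congr hz, tsum_zero]

section Forward

variable {f u g v : Linf}

/-- Entry hypothesis: `R` has orthonormal columns. -/
def EntryHyp (f u g v : Linf) : Prop :=
  ∀ m n : ℤ, ⟪(Rop f u g v (bb m) : L2), Rop f u g v (bb n)⟫ = if m = n then 1 else 0

lemma fwd_R1 (hE : EntryHyp f u g v) :
    ∀ i j : ℤ, i < 0 → j < 0 → conj (FC f i) * FC f j = conj (FC g i) * FC g j := by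
  intro i j hi hj
  set m := -1 - i with hm
  set n := -1 - j with hn
  have hm0 : (0:ℤ) ≤ m := by omega
  have hn0 : (0:ℤ) ≤ n := by omega
  have e1 : Spl f f m n + Smi g g m n = if m = n then 1 else 0 := by
    rw [← entry_pp f u g v hm0 hn0]; exact hE m n
  have e2 : Spl f f (m + 1) (n + 1) + Smi g g (m + 1) (n + 1) = if m = n then 1 else 0 := by
    rw [← entry_pp f u g v (by omega : (0:ℤ) ≤ m + 1) (by omega : (0:ℤ) ≤ n + 1), hE (m+1) (n+1)]
    exact delta_congr (by omega)
  rw [Spl_shift, Smi_shift] at e2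
  have hi' : -1 - m = i := by omega
  have hj' : -1 - n = j := by omega
  rw [hi', hj'] at e2
  linear_combination e2 - e1

lemma fwd_R2 (hE : EntryHyp f u g v) :
    ∀ i j : ℤ, 0 < i → 0 < j → conj (FC u i) * FC u j = conj (FC v i) * FC v j := by
  intro i j hi hj
  set m := -i with hm
  set n := -j with hn
  have hm0 : m < 0 := by omega
  have hn0 : n < 0 := by omega
  have e1 : Spl u u (m - 1) (n - 1) + Smi v v (m - 1) (n - 1)
      = if m = n then 1 else 0 := by
    rw [← entry_mm f u g v (by omega : m - 1 < 0) (by omega : n - 1 < 0), hE (m-1) (n-1)]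
    exact delta_congr (by omega)
  have e2 : Spl u u m n + Smi v v m n = if m = n then 1 else 0 := by
    rw [← entry_mm f u g v hm0 hn0]; exact hE m n
  have s1 := Spl_shift u u (m - 1) (n - 1)
  have s2 := Smi_shift v v (m - 1) (n - 1)
  have hmm : m - 1 + 1 = m := by ring
  have hnn : n - 1 + 1 = n := by ring
  have hi' : -1 - (m - 1) = i := by omega
  have hj' : -1 - (n - 1) = j := by omega
  rw [hmm, hnn, hi', hj'] at s1 s2
  rw [s1, s2] at e2
  linear_combination e2 - e1

lemma fwd_R3 (hE : EntryHyp f u g v) :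
    ∀ i j : ℤ, i < 0 → 0 < j → conj (FC f i) * FC u j = conj (FC g i) * FC v j := by
  intro i j hi hj
  set m := -1 - i with hm
  set n := -j with hn
  have hm0 : (0:ℤ) ≤ m := by omega
  have hn0 : n - 1 < 0 := by omega
  have e1 : Spl f u m (n - 1) + Smi g v m (n - 1) = 0 := by
    rw [← entry_pm f u g v hm0 hn0, hE m (n - 1), if_neg (by omega)]
  have e2 : Spl f u (m + 1) (n - 1 + 1) + Smi g v (m + 1) (n - 1 + 1) = 0 := by
    rw [← entry_pm f u g v (by omega : (0:ℤ) ≤ m + 1) (by omega : n - 1 + 1 < 0),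
      hE (m + 1) (n - 1 + 1), if_neg (by omega)]
  rw [Spl_shift, Smi_shift] at e2
  have hi' : -1 - m = i := by omega
  have hj' : -1 - (n - 1) = j := by omega
  rw [hi', hj'] at e2
  linear_combination e2 - e1

lemma fwd_ACF (hE : EntryHyp f u g v) :
    ∀ d : ℤ, FC (conjInf f ⊙ f) d = if d = 0 then 1 else 0 := by
  have hR1 := fwd_R1 hE
  have main : ∀ d : ℤ, 0 ≤ d → FC (conjInf f ⊙ f) d = if d = 0 then 1 else 0 := by
    intro d hd
    have e1 : Spl f f d 0 + Smi g g d 0 = if d = 0 then 1 else 0 := by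
      rw [← entry_pp f u g v hd le_rfl]; exact hE d 0
    have hsub : Smi g g d 0 = (1:ℂ) * Smi f f d 0 := by
      refine Smi_factor 1 fun k hk => ?_
      rw [one_mul, sub_zero, ← hR1 (k - d) k (by omega) hk]
    rw [hsub, one_mul] at e1
    have h := Spl_add_Smi f f d 0
    rw [show d - 0 = d by ring] at h
    rw [← h]
    exact e1
  intro d
  by_cases hd : 0 ≤ d
  · exact main d hd
  · rw [FC_flip, main (-d) (by omega), if_neg (by omega), map_zero, if_neg (by omega)]

lemma fwd_ACV (hE : EntryHyp f u g v) :
    ∀ d : ℤ, FC (conjInf v ⊙ v) d = if d = 0 then 1 else 0 := by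
  have hR2 := fwd_R2 hE
  have main : ∀ d : ℤ, d ≤ 0 → FC (conjInf v ⊙ v) d = if d = 0 then 1 else 0 := by
    intro d hd
    have e1 : Spl u u (d - 1) (-1) + Smi v v (d - 1) (-1) = if d = 0 then 1 else 0 := by
      rw [← entry_mm f u g v (by omega : d - 1 < 0) (by omega : (-1:ℤ) < 0), hE (d-1) (-1)]
      exact delta_congr (by omega)
    have hsub : Spl u u (d - 1) (-1) = (1:ℂ) * Spl v v (d - 1) (-1) := by
      refine Spl_factor 1 fun k hk => ?_
      rw [one_mul, hR2 (k - (d - 1)) (k - (-1)) (by omega) (by omega)]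
    rw [hsub, one_mul] at e1
    have := Spl_add_Smi v v (d - 1) (-1)
    rw [show d - 1 - (-1) = d by ring] at this
    rw [← this]
    exact e1
  intro d
  by_cases hd : d ≤ 0
  · exact main d hd
  · rw [FC_flip, main (-d) (by omega), if_neg (by omega), map_zero, if_neg (by omega)]

lemma norm_one_of_sq (lam : ℂ) (h : conj lam * lam = 1) : ‖lam‖ = 1 := by
  have h1 : Complex.normSq lam = 1 := by
    have := congrArg Complex.re h
    rwa [mul_comm, Complex.mul_conj, Complex.ofReal_re, Complex.one_re] at this
  have h2 := Complex.sq_norm lam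
  rw [h1] at h2
  have h3 := norm_nonneg lam
  nlinarith

lemma conj_mul_self_one {lam : ℂ} (h : ‖lam‖ = 1) : conj lam * lam = 1 := by
  rw [mul_comm, Complex.mul_conj, Complex.normSq_eq_norm_sq, h]
  norm_num

/-- Key step: the negative Fourier coefficients of `v̄ f` vanish. -/
lemma fv_zero (hE : EntryHyp f u g v) (lam : ℂ) (hlam : conj lam * lam = 1)
    (hG : ∀ i : ℤ, i < 0 → FC g i = conj lam * FC f i)
    (hU : ∀ j : ℤ, 0 < j → FC u j = lam * FC v j) :
    ∀ d : ℤ, d < 0 → FC (conjInf v ⊙ f) d = 0 := by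
  intro d hd
  have e1 : Spl u f d 0 + Smi v g d 0 = 0 := by
    rw [← entry_mp f u g v (by omega : d < 0) le_rfl, hE d 0, if_neg (by omega)]
  have h1 : Spl u f d 0 = conj lam * Spl v f d 0 := by
    refine Spl_factor (conj lam) fun k hk => ?_
    rw [hU (k - d) (by omega), map_mul]
    ring
  have h2 : Smi v g d 0 = conj lam * Smi v f d 0 := by
    refine Smi_factor (conj lam) fun k hk => ?_
    rw [sub_zero, hG k (by omega)]
    ring
  rw [h1, h2, ← mul_add] at e1
  have hconjlam : conj lam ≠ 0 := by
    intro hc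
    rw [hc, zero_mul] at hlam
    exact one_ne_zero hlam.symm
  have h3 : Spl v f d 0 + Smi v f d 0 = 0 := by
    rcases mul_eq_zero.mp e1 with hc | hc
    · exact absurd hc hconjlam
    · exact hc
  rw [Spl_add_Smi, show d - 0 = d by ring] at h3
  exact h3

end Forward


lemma FC_mul_comm (φ ψ : Linf) (n : ℤ) : FC (φ ⊙ ψ) n = FC (ψ ⊙ φ) n := by
  refine fourierCoeff_congr_ae ?_ n
  filter_upwards [mulInf_coeFn φ ψ, mulInf_coeFn ψ φ] with t h1 h2
  rw [h1, h2, mul_comm]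

lemma zero_of_conj_self {z : ℂ} (h : conj z * z = 0) : z = 0 := by
  have h1 := congrArg Complex.re h
  rw [mul_comm, Complex.mul_conj, Complex.ofReal_re, Complex.zero_re] at h1
  exact Complex.normSq_eq_zero.mp h1

lemma norm_div_one {a b : ℂ} (hb : b ≠ 0) (h : conj a * a = conj b * b) : ‖a / b‖ = 1 := by
  have h1 : Complex.normSq a = Complex.normSq b := by
    have h2 := congrArg Complex.re h
    rwa [mul_comm, Complex.mul_conj, mul_comm (conj b), Complex.mul_conj,
      Complex.ofReal_re, Complex.ofReal_re] at h2
  have h3 : 0 < Real.sqrt (Complex.normSq b) :=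
    Real.sqrt_pos.mpr (Complex.normSq_pos.mpr hb)
  rw [norm_div, Complex.norm_def, Complex.norm_def, h1, div_self (ne_of_gt h3)]

lemma ratio_lemma {A B : ℤ → ℂ} {P : ℤ → Prop}
    (hrel : ∀ i j, P i → P j → conj (A i) * A j = conj (B i) * B j)
    {j₀ : ℤ} (hj₀ : P j₀) (hB : B j₀ ≠ 0) :
    ‖A j₀ / B j₀‖ = 1 ∧ ∀ j, P j → A j = (A j₀ / B j₀) * B j := by
  have hdiag := hrel j₀ j₀ hj₀ hj₀
  constructor
  · exact norm_div_one hB hdiag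
  · intro j hj
    have hstar : A j * conj (A j₀) = B j * conj (B j₀) := by
      calc A j * conj (A j₀) = conj (conj (A j) * A j₀) := by
            rw [map_mul, Complex.conj_conj]
        _ = conj (conj (B j) * B j₀) := by rw [hrel j j₀ hj hj₀]
        _ = B j * conj (B j₀) := by rw [map_mul, Complex.conj_conj]
    have hBconj : conj (B j₀) ≠ 0 := by
      intro hc
      apply hB
      have := congrArg conj hc
      simpa using this
    have key : A j * B j₀ = B j * A j₀ := by
      apply mul_left_cancel₀ hBconj
      linear_combination A j₀ * hstar - A j * hdiag
    rw [div_mul_eq_mul_div, eq_div_iff hB]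
    linear_combination key

lemma conj_delta (m n : ℤ) : conj (if n = m then (1:ℂ) else 0) = if m = n then 1 else 0 := by
  by_cases h : n = m
  · rw [if_pos h, if_pos h.symm, map_one]
  · rw [if_neg h, if_neg (fun hh => h hh.symm), map_zero]


lemma fwd_cases {f u g v : Linf} (hE : EntryHyp f u g v) :
    (MemHinf f ∧ MemHinf g ∧ MemHinf (conjInf u) ∧ MemHinf (conjInf v)) ∨
      (∃ lam : ℂ, ‖lam‖ = 1 ∧ MemHinf (f - lam • g) ∧
        MemHinf (conjInf u - conj lam • conjInf v) ∧ MemHinf (f ⊙ conjInf v)) := by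
  have hR1 := fwd_R1 hE
  have hR2 := fwd_R2 hE
  have hR3 := fwd_R3 hE
  by_cases hF0 : ∀ i : ℤ, i < 0 → FC f i = 0
  · by_cases hV0 : ∀ j : ℤ, 0 < j → FC v j = 0
    · left
      refine ⟨hF0, ?_, ?_, ?_⟩
      · intro i hi
        have h0 : conj (FC g i) * FC g i = 0 := by
          rw [← hR1 i i hi hi, hF0 i hi, mul_zero]
        exact zero_of_conj_self h0
      · intro n hn
        show FC (conjInf u) n = 0
        have h0 : conj (FC u (-n)) * FC u (-n) = 0 := by
          rw [hR2 (-n) (-n) (by omega) (by omega), hV0 (-n) (by omega), mul_zero]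
        rw [FC_conj, zero_of_conj_self h0, map_zero]
      · intro n hn
        show FC (conjInf v) n = 0
        rw [FC_conj, hV0 (-n) (by omega), map_zero]
    · right
      push_neg at hV0
      obtain ⟨j₀, hj₀, hVj₀⟩ := hV0
      obtain ⟨hnorm, hUV'⟩ := ratio_lemma (A := FC u) (B := FC v) (P := fun j => 0 < j)
        (fun i j hi hj => hR2 i j hi hj) hj₀ hVj₀
      set lam := FC u j₀ / FC v j₀ with hlam
      have hlamsq := conj_mul_self_one hnorm
      have hG : ∀ i : ℤ, i < 0 → FC g i = conj lam * FC f i := by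
        intro i hi
        have h := hR3 i j₀ hi hj₀
        rw [hF0 i hi, map_zero, zero_mul] at h
        have hGi : FC g i = 0 := by
          rcases mul_eq_zero.mp h.symm with hc | hc
          · have := congrArg conj hc
            simpa using this
          · exact absurd hc hVj₀
        rw [hGi, hF0 i hi, mul_zero]
      refine ⟨lam, hnorm, ?_, ?_, ?_⟩
      · intro n hn
        show FC (f - lam • g) n = 0
        rw [FC_sub, FC_smul, hF0 n hn, hG n hn, hF0 n hn, mul_zero, mul_zero, sub_zero]
      · intro n hn
        show FC (conjInf u - conj lam • conjInf v) n = 0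
        rw [FC_sub, FC_smul, FC_conj, FC_conj, hUV' (-n) (by omega), map_mul]
        ring
      · intro n hn
        show FC (f ⊙ conjInf v) n = 0
        rw [FC_mul_comm]
        exact fv_zero hE lam hlamsq hG hUV' n hn
  · right
    push_neg at hF0
    obtain ⟨i₀, hi₀, hFi₀⟩ := hF0
    have hdiag := hR1 i₀ i₀ hi₀ hi₀
    have hGi₀ : FC g i₀ ≠ 0 := by
      intro hc
      rw [hc, mul_zero] at hdiag
      exact hFi₀ (zero_of_conj_self hdiag)
    obtain ⟨hnorm, hFG⟩ := ratio_lemma (A := FC f) (B := FC g) (P := fun i => i < 0)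
      (fun i j hi hj => hR1 i j hi hj) hi₀ hGi₀
    set lam := FC f i₀ / FC g i₀ with hlam
    have hlamsq := conj_mul_self_one hnorm
    have hG : ∀ i : ℤ, i < 0 → FC g i = conj lam * FC f i := by
      intro i hi
      rw [hFG i hi, ← mul_assoc, hlamsq, one_mul]
    have hconjF : conj (FC f i₀) ≠ 0 := by
      intro hc
      apply hFi₀
      have := congrArg conj hc
      simpa using this
    have hUV : ∀ j : ℤ, 0 < j → FC u j = lam * FC v j := by
      intro j hj
      have key := hR3 i₀ j hi₀ hj
      have key2 : conj (FC f i₀) * (lam * FC v j) = conj (FC g i₀) * FC v j := by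
        rw [hlam]
        field_simp
        linear_combination (FC v j) * hdiag
      apply mul_left_cancel₀ hconjF
      rw [key2]
      exact key
    refine ⟨lam, hnorm, ?_, ?_, ?_⟩
    · intro n hn
      show FC (f - lam • g) n = 0
      rw [FC_sub, FC_smul, hFG n hn, sub_self]
    · intro n hn
      show FC (conjInf u - conj lam • conjInf v) n = 0
      rw [FC_sub, FC_smul, FC_conj, FC_conj, hUV (-n) (by omega), map_mul]
      ring
    · intro n hn
      show FC (f ⊙ conjInf v) n = 0
      rw [FC_mul_comm]
      exact fv_zero hE lam hlamsq hG hUV n hn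


section Backward

variable {f u g v : Linf}

lemma bwd_a (hACF : ∀ d : ℤ, FC (conjInf f ⊙ f) d = if d = 0 then 1 else 0)
    (hACV : ∀ d : ℤ, FC (conjInf v ⊙ v) d = if d = 0 then 1 else 0)
    (hF : ∀ i : ℤ, i < 0 → FC f i = 0) (hG : ∀ i : ℤ, i < 0 → FC g i = 0)
    (hU : ∀ j : ℤ, 0 < j → FC u j = 0) (hV : ∀ j : ℤ, 0 < j → FC v j = 0) :
    EntryHyp f u g v := by
  have hpm : ∀ m n : ℤ, 0 ≤ m → n < 0 →
      ⟪(Rop f u g v (bb m) : L2), Rop f u g v (bb n)⟫ = 0 := by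
    intro m n hm hn
    rw [entry_pm f u g v hm hn]
    have h1 : Spl f u m n = 0 := Spl_zero fun k hk => by
      rw [hU (k - n) (by omega), mul_zero]
    have h2 : Smi g v m n = 0 := Smi_zero fun k hk => by
      rw [hG (k - m) (by omega), map_zero, zero_mul]
    rw [h1, h2, add_zero]
  intro m n
  by_cases hm : 0 ≤ m
  · by_cases hn : 0 ≤ n
    · rw [entry_pp f u g v hm hn]
      have h1 : Smi g g m n = 0 := Smi_zero fun k hk => by
        rw [hG (k - m) (by omega), map_zero, zero_mul]
      have h2 : Smi f f m n = 0 := Smi_zero fun k hk => by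
        rw [hF (k - m) (by omega), map_zero, zero_mul]
      have key : Spl f f m n + Smi g g m n = Spl f f m n + Smi f f m n := by rw [h1, h2]
      rw [key, Spl_add_Smi, hACF (m - n)]
      exact delta_congr (by omega)
    · rw [hpm m n hm (by omega), if_neg (by omega)]
  · by_cases hn : 0 ≤ n
    · rw [← inner_conj_symm, hpm n m hn (by omega), map_zero, if_neg (by omega)]
    · rw [entry_mm f u g v (by omega) (by omega)]
      have h1 : Spl u u m n = 0 := Spl_zero fun k hk => by
        rw [hU (k - n) (by omega), mul_zero]
      have h2 : Spl v v m n = 0 := Spl_zero fun k hk => by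
        rw [hV (k - n) (by omega), mul_zero]
      have key : Spl u u m n + Smi v v m n = Spl v v m n + Smi v v m n := by rw [h1, h2]
      rw [key, Spl_add_Smi, hACV (m - n)]
      exact delta_congr (by omega)

lemma bwd_b (hACF : ∀ d : ℤ, FC (conjInf f ⊙ f) d = if d = 0 then 1 else 0)
    (hACV : ∀ d : ℤ, FC (conjInf v ⊙ v) d = if d = 0 then 1 else 0)
    (lam : ℂ) (hlamsq : conj lam * lam = 1)
    (hFG : ∀ i : ℤ, i < 0 → FC f i = lam * FC g i)
    (hUV : ∀ j : ℤ, 0 < j → FC u j = lam * FC v j)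
    (hvf : ∀ d : ℤ, d < 0 → FC (conjInf v ⊙ f) d = 0) :
    EntryHyp f u g v := by
  have hG : ∀ i : ℤ, i < 0 → FC g i = conj lam * FC f i := by
    intro i hi
    rw [hFG i hi, ← mul_assoc, hlamsq, one_mul]
  have hpm : ∀ m n : ℤ, 0 ≤ m → n < 0 →
      ⟪(Rop f u g v (bb m) : L2), Rop f u g v (bb n)⟫ = 0 := by
    intro m n hm hn
    rw [entry_pm f u g v hm hn]
    have h1 : Spl f u m n = lam * Spl f v m n := Spl_factor lam fun k hk => by
      rw [hUV (k - n) (by omega)]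
      ring
    have h2 : Smi g v m n = lam * Smi f v m n := Smi_factor lam fun k hk => by
      rw [hG (k - m) (by omega), map_mul, Complex.conj_conj]
      ring
    rw [h1, h2, ← mul_add, Spl_add_Smi, FC_flip, show -(m - n) = n - m by ring,
      hvf (n - m) (by omega), map_zero, mul_zero]
  intro m n
  by_cases hm : 0 ≤ m
  · by_cases hn : 0 ≤ n
    · rw [entry_pp f u g v hm hn]
      have h1 : Smi g g m n = (1 : ℂ) * Smi f f m n := Smi_factor 1 fun k hk => by
        rw [hG (k - m) (by omega), hG (k - n) (by omega), map_mul, Complex.conj_conj]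
        linear_combination (conj (FC f (k - m)) * FC f (k - n)) * hlamsq
      rw [h1, one_mul, Spl_add_Smi, hACF (m - n)]
      exact delta_congr (by omega)
    · rw [hpm m n hm (by omega), if_neg (by omega)]
  · by_cases hn : 0 ≤ n
    · rw [← inner_conj_symm, hpm n m hn (by omega), map_zero, if_neg (by omega)]
    · rw [entry_mm f u g v (by omega) (by omega)]
      have h1 : Spl u u m n = (1 : ℂ) * Spl v v m n := Spl_factor 1 fun k hk => by
        rw [hUV (k - m) (by omega), hUV (k - n) (by omega), map_mul]
        linear_combination (conj (FC v (k - m)) * FC v (k - n)) * hlamsq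
      rw [h1, one_mul, Spl_add_Smi, hACV (m - n)]
      exact delta_congr (by omega)

end Backward

/-- The GSIO `R_{[[f,u],[g,v]]}` is an isometry on `L²` iff `|f| = |v| = 1`
a.e. and either (a) `f, g, ū, v̄ ∈ H^∞`, or (b) there is a unimodular constant `λ` with
`f − λg, ū − λ̄v̄, f·v̄ ∈ H^∞`. -/
theorem statement6 (f u g v : Linf) :
    (∀ x : L2, ‖Rop f u g v x‖ = ‖x‖) ↔
      ((∀ᵐ t ∂μC, ‖(f : Circ → ℂ) t‖ = 1) ∧ (∀ᵐ t ∂μC, ‖(v : Circ → ℂ) t‖ = 1)) ∧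
        ((MemHinf f ∧ MemHinf g ∧ MemHinf (conjInf u) ∧ MemHinf (conjInf v)) ∨
          (∃ lam : ℂ, ‖lam‖ = 1 ∧ MemHinf (f - lam • g) ∧
            MemHinf (conjInf u - conj lam • conjInf v) ∧ MemHinf (f ⊙ conjInf v))) := by
  rw [isometry_iff_entries (Rop f u g v)]
  constructor
  · intro hE
    have hE' : EntryHyp f u g v := hE
    exact ⟨⟨(unimod_iff f).mpr (fwd_ACF hE'), (unimod_iff v).mpr (fwd_ACV hE')⟩, fwd_cases hE'⟩
  · rintro ⟨⟨hf1, hv1⟩, hcase⟩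
    have hACF := (unimod_iff f).mp hf1
    have hACV := (unimod_iff v).mp hv1
    rcases hcase with ⟨h1, h2, h3, h4⟩ | ⟨lam, hnorm, hb1, hb2, hb3⟩
    · have hU : ∀ j : ℤ, 0 < j → FC u j = 0 := by
        intro j hj
        have h : FC (conjInf u) (-j) = 0 := h3 (-j) (by omega)
        rw [FC_conj, neg_neg] at h
        have := congrArg conj h
        simpa using this
      have hV : ∀ j : ℤ, 0 < j → FC v j = 0 := by
        intro j hj
        have h : FC (conjInf v) (-j) = 0 := h4 (-j) (by omega)
        rw [FC_conj, neg_neg] at h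
        have := congrArg conj h
        simpa using this
      exact bwd_a hACF hACV h1 h2 hU hV
    · have hlamsq := conj_mul_self_one hnorm
      have hFG : ∀ i : ℤ, i < 0 → FC f i = lam * FC g i := by
        intro i hi
        have h : FC (f - lam • g) i = 0 := hb1 i hi
        rw [FC_sub, FC_smul, sub_eq_zero] at h
        exact h
      have hUV : ∀ j : ℤ, 0 < j → FC u j = lam * FC v j := by
        intro j hj
        have h : FC (conjInf u - conj lam • conjInf v) (-j) = 0 := hb2 (-j) (by omega)
        rw [FC_sub, FC_smul, FC_conj, FC_conj, neg_neg, sub_eq_zero] at h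
        have := congrArg conj h
        simpa [map_mul] using this
      have hvf : ∀ d : ℤ, d < 0 → FC (conjInf v ⊙ f) d = 0 := by
        intro d hd
        have h : FC (f ⊙ conjInf v) d = 0 := hb3 d hd
        rwa [FC_mul_comm] at h
      exact bwd_b hACF hACV lam hlamsq hFG hUV hvf

end GSIO
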